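/- Let n ≥ m ≥ 2 be integers and let α ∈ (0,1) ∪ (1,∞). Then every function F : ℝ → ℝ satisfying F(H_{w_n}(p)) = ‖w_n(p)‖_α for all p ∈ [1/m, 1/(m−1)] is strictly concave on the interval [ln(m−1), ln m]. -/

import Mathlib

open Real

/-- Shannon entropy (natural log, with `0 * log 0 = 0` since `Real.log 0 = 0`). -/
noncomputable def shannonEntropy {n : ℕ} (p : Fin n → ℝ) : ℝ :=
  -∑ i, p i * Real.log (p i)

/-- ℓ_α-norm of a vector (real power). -/
noncomputable def lNorm {n : ℕ} (α : ℝ) (p : Fin n → ℝ) : ℝ :=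
  (∑ i, p i ^ α) ^ (1 / α)

/-- `p` is an `n`-ary probability vector. -/
def IsProbVec {n : ℕ} (p : Fin n → ℝ) : Prop :=
  (∀ i, 0 ≤ p i) ∧ ∑ i, p i = 1

/-- The vector `v_n(q)`: first entry `1 - (n-1)q`, the other `n-1` entries equal `q`. -/
noncomputable def vVec (n : ℕ) (q : ℝ) : Fin n → ℝ :=
  fun i => if (i : ℕ) = 0 then 1 - ((n : ℝ) - 1) * q else q

/-- The vector `w_n(r)`: first `⌊1/r⌋` entries equal `r`, the next entry is
`1 - ⌊1/r⌋·r`, the remaining entries are `0`. -/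
noncomputable def wVec (n : ℕ) (r : ℝ) : Fin n → ℝ :=
  fun i => if (i : ℕ) < ⌊1 / r⌋₊ then r
           else if (i : ℕ) = ⌊1 / r⌋₊ then 1 - (⌊1 / r⌋₊ : ℝ) * r
           else 0

open Set

noncomputable def Nfun (k α p : ℝ) : ℝ := k * p ^ α + (1 - k*p) ^ α
noncomputable def Efun (k p : ℝ) : ℝ :=
  -(k * (p * Real.log p) + (1 - k*p) * Real.log (1 - k*p))
noncomputable def Yfun (k α p : ℝ) : ℝ := Nfun k α p ^ (1/α)
noncomputable def Ed (k p : ℝ) : ℝ := k * (Real.log (1 - k*p) - Real.log p)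
noncomputable def Yd (k α p : ℝ) : ℝ :=
  k * Nfun k α p ^ (1/α - 1) * (p ^ (α-1) - (1 - k*p) ^ (α-1))
noncomputable def Ed2 (k p : ℝ) : ℝ := k * (-k / (1 - k*p) - 1/p)
noncomputable def Yd2 (k α p : ℝ) : ℝ :=
  k * ((1/α - 1) * Nfun k α p ^ (1/α - 2)
        * (k*α*p^(α-1) - k*α*(1 - k*p)^(α-1)) * (p^(α-1) - (1 - k*p)^(α-1))
     + Nfun k α p ^ (1/α - 1) * ((α-1)*p^(α-2) + k*(α-1)*(1 - k*p)^(α-2)))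
noncomputable def phi (k α p : ℝ) : ℝ := Yd k α p / Ed k p

section Aux

lemma expDeriv (z : ℝ) (hz0 : 0 < z) (b : ℝ) :
    HasDerivAt (fun t : ℝ => z ^ t) (z ^ b * Real.log z) b :=
  (Real.hasStrictDerivAt_const_rpow hz0 b).hasDerivAt

lemma expDeriv' (z : ℝ) (hz0 : 0 < z) (b : ℝ) :
    HasDerivAt (fun t : ℝ => z ^ (1 - t)) (-(z ^ (1 - b) * Real.log z)) b := by
  have h1 : HasDerivAt (fun t : ℝ => 1 - t) (-1) b := by
    simpa using (hasDerivAt_id b).const_sub (1:ℝ)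
  have := (expDeriv z hz0 (1 - b)).comp b h1
  simpa [mul_comm, Function.comp_def] using this

lemma core (k z α : ℝ) (hk : 1 ≤ k) (hz0 : 0 < z) (hz1 : z < 1)
    (hα : α ∈ Set.Ioo (0:ℝ) 1 ∪ Set.Ioi 1) :
    0 < (α - 1) * Real.log z * (k + z) + (k + z ^ α) * (z ^ (1 - α) - 1) := by
  have hlz : Real.log z < 0 := Real.log_neg hz0 hz1
  set χ : ℝ → ℝ := fun b => z ^ (1 - b) + k * z ^ b - (k + z) with hχdef
  set ψ : ℝ → ℝ := fun b => z ^ (1 - b) - k * z ^ b + (k - z) + b * (k + z) * Real.log z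
    with hψdef
  have hχd : ∀ b : ℝ, HasDerivAt χ (Real.log z * (k * z ^ b - z ^ (1 - b))) b := by
    intro b
    have := ((expDeriv' z hz0 b).add ((expDeriv z hz0 b).const_mul k)).sub
      (hasDerivAt_const b (k + z))
    exact this.congr_deriv (by ring)
  have hψd : ∀ b : ℝ, HasDerivAt ψ (-(Real.log z) * χ b) b := by
    intro b
    have h := (((expDeriv' z hz0 b).sub ((expDeriv z hz0 b).const_mul k)).add
      (hasDerivAt_const b (k - z))).add ((hasDerivAt_id b).mul_const ((k + z) * Real.log z))
    have heq : ψ = fun t : ℝ =>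
        z ^ (1 - t) - k * z ^ t + (k - z) + id t * ((k + z) * Real.log z) := by
      funext t; simp only [hψdef, id]; ring
    rw [heq]
    exact h.congr_deriv (by simp only [hχdef]; ring)
  have hχ0 : χ 0 = 0 := by simp [hχdef]; ring
  have hχ1 : χ 1 ≤ 0 := by
    simp only [hχdef, sub_self, Real.rpow_zero, Real.rpow_one]
    nlinarith
  have hψ0 : ψ 0 = 0 := by simp [hψdef]
  -- derivative sign of χ
  have hsplit : ∀ b : ℝ, z ^ (1 - b) = z ^ b * z ^ (1 - 2 * b) := by
    intro b; rw [← Real.rpow_add hz0]; ring_nf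
  have hχd_neg : ∀ b : ℝ, z ^ (1 - 2 * b) < k →
      Real.log z * (k * z ^ b - z ^ (1 - b)) < 0 := by
    intro b hb
    have hzb : (0:ℝ) < z ^ b := Real.rpow_pos_of_pos hz0 b
    have : z ^ (1 - b) < k * z ^ b := by
      rw [hsplit b, mul_comm (z ^ b)]; exact mul_lt_mul_of_pos_right hb hzb
    have h2 : 0 < k * z ^ b - z ^ (1 - b) := by linarith
    exact mul_neg_of_neg_of_pos hlz h2
  have hχd_pos : ∀ b : ℝ, k < z ^ (1 - 2 * b) →
      0 < Real.log z * (k * z ^ b - z ^ (1 - b)) := by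
    intro b hb
    have hzb : (0:ℝ) < z ^ b := Real.rpow_pos_of_pos hz0 b
    have : k * z ^ b < z ^ (1 - b) := by
      rw [hsplit b, mul_comm (z ^ b)]; exact mul_lt_mul_of_pos_right hb hzb
    exact mul_pos_of_neg_of_neg hlz (by linarith)
  -- χ < 0 on (0,1)
  have hχneg : ∀ b : ℝ, 0 < b → b < 1 → χ b < 0 := by
    intro b hb0 hb1
    by_cases hc : z ^ (1 - 2 * b) ≤ k
    · have : StrictAntiOn χ (Icc 0 b) := by
        refine strictAntiOn_of_deriv_neg (convex_Icc 0 b)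
          (fun t _ => (hχd t).continuousAt.continuousWithinAt) ?_
        intro t ht
        rw [interior_Icc] at ht
        rw [(hχd t).deriv]
        refine hχd_neg t (lt_of_lt_of_le ?_ hc)
        exact Real.rpow_lt_rpow_of_exponent_gt hz0 hz1 (by linarith [ht.2])
      have := this (left_mem_Icc.2 hb0.le) (right_mem_Icc.2 hb0.le) hb0
      rwa [hχ0] at this
    · push_neg at hc
      have : StrictMonoOn χ (Icc b 1) := by
        refine strictMonoOn_of_deriv_pos (convex_Icc b 1)
          (fun t _ => (hχd t).continuousAt.continuousWithinAt) ?_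
        intro t ht
        rw [interior_Icc] at ht
        rw [(hχd t).deriv]
        refine hχd_pos t (lt_trans hc ?_)
        exact Real.rpow_lt_rpow_of_exponent_gt hz0 hz1 (by linarith [ht.1])
      have := this (left_mem_Icc.2 hb1.le) (right_mem_Icc.2 hb1.le) hb1
      linarith [hχ1]
  -- χ > 0 on (-∞,0)
  have hχpos : ∀ b : ℝ, b < 0 → 0 < χ b := by
    intro b hb
    have : StrictAntiOn χ (Icc b 0) := by
      refine strictAntiOn_of_deriv_neg (convex_Icc b 0)
        (fun t _ => (hχd t).continuousAt.continuousWithinAt) ?_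
      intro t ht
      rw [interior_Icc] at ht
      rw [(hχd t).deriv]
      refine hχd_neg t (lt_of_lt_of_le ?_ hk)
      exact Real.rpow_lt_one hz0.le hz1 (by linarith [ht.2])
    have := this (left_mem_Icc.2 hb.le) (right_mem_Icc.2 hb.le) hb
    rwa [hχ0] at this
  -- ψ (1-α) < 0
  have hψβ : ψ (1 - α) < 0 := by
    rcases hα with ⟨ha0, ha1⟩ | ha1
    · -- β = 1 - α ∈ (0,1)
      have hb0 : (0:ℝ) < 1 - α := by linarith
      have hb1 : 1 - α < 1 := by linarith
      have : StrictAntiOn ψ (Icc 0 (1 - α)) := by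
        refine strictAntiOn_of_deriv_neg (convex_Icc _ _)
          (fun t _ => (hψd t).continuousAt.continuousWithinAt) ?_
        intro t ht
        rw [interior_Icc] at ht
        rw [(hψd t).deriv]
        exact mul_neg_of_pos_of_neg (by linarith) (hχneg t ht.1 (by linarith [ht.2]))
      have := this (left_mem_Icc.2 hb0.le) (right_mem_Icc.2 hb0.le) hb0
      rwa [hψ0] at this
    · -- β = 1 - α < 0
      have hb : 1 - α < 0 := by simp only [Set.mem_Ioi] at ha1; linarith
      have : StrictMonoOn ψ (Icc (1 - α) 0) := by
        refine strictMonoOn_of_deriv_pos (convex_Icc _ _)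
          (fun t _ => (hψd t).continuousAt.continuousWithinAt) ?_
        intro t ht
        rw [interior_Icc] at ht
        rw [(hψd t).deriv]
        exact mul_pos (by linarith) (hχpos t ht.2)
      have := this (left_mem_Icc.2 hb.le) (right_mem_Icc.2 hb.le) hb
      rwa [hψ0] at this
  -- conclude
  have e1 : z ^ (1 - (1 - α)) = z ^ α := by norm_num
  have e2 : z ^ α * z ^ (1 - α) = z := by
    rw [← Real.rpow_add hz0]; norm_num
  simp only [hψdef, e1] at hψβ
  nlinarith [hψβ, e2]


lemma alg2 (k p q α : ℝ) (hk : 1 ≤ k) (hp : 0 < p) (hq : 0 < q) (hqp : q < p)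
    (hpq : k * p + q = 1) (hα : α ∈ Set.Ioo (0:ℝ) 1 ∪ Set.Ioi 1) :
    0 < (α - 1) * (Real.log q - Real.log p) * (p ^ (α-1) * q ^ (α-1))
      + (k * p ^ α + q ^ α) * (p ^ (α-1) - q ^ (α-1)) := by
  set z : ℝ := q / p with hz
  have hz0 : 0 < z := div_pos hq hp
  have hz1 : z < 1 := (div_lt_one hp).2 hqp
  have H := core k z α hk hz0 hz1 hα
  have hW : 0 < z ^ (α - 1) := Real.rpow_pos_of_pos hz0 _
  have hU : 0 < p ^ (α - 1) := Real.rpow_pos_of_pos hp _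
  have hBW : z ^ (1 - α) * z ^ (α - 1) = 1 := by
    rw [← Real.rpow_add hz0]; norm_num
  have hqz : q = p * z := by rw [hz]; field_simp
  have hqα : q ^ α = p ^ α * z ^ α := by rw [hqz, Real.mul_rpow hp.le hz0.le]
  have hqα1 : q ^ (α-1) = p ^ (α-1) * z ^ (α-1) := by
    rw [hqz, Real.mul_rpow hp.le hz0.le]
  have hpα : p ^ α = p ^ (α-1) * p := by
    have := Real.rpow_add_one hp.ne' (α - 1)
    rwa [sub_add_cancel] at this
  have hlog : Real.log q - Real.log p = Real.log z := (Real.log_div hq.ne' hp.ne').symm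
  have hpkz : p * (k + z) = 1 := by
    have : p * z = q := hqz.symm
    nlinarith
  have hkz : 0 < k + z := by linarith
  have key : ((α - 1) * (Real.log q - Real.log p) * (p ^ (α-1) * q ^ (α-1))
      + (k * p ^ α + q ^ α) * (p ^ (α-1) - q ^ (α-1))) * (k + z)
      = (p ^ (α-1))^2 * (((α - 1) * Real.log z * (k + z)
          + (k + z ^ α) * (z ^ (1 - α) - 1)) * z ^ (α-1)) := by
    rw [hlog, hqα, hqα1, hpα]
    linear_combination ((p^(α-1))^2 * (k + z^α) * (1 - z^(α-1))) * hpkz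
      - ((p^(α-1))^2 * (k + z^α)) * hBW
  have hR : 0 < (p ^ (α-1))^2 * (((α - 1) * Real.log z * (k + z)
      + (k + z ^ α) * (z ^ (1 - α) - 1)) * z ^ (α-1)) :=
    mul_pos (pow_pos hU 2) (mul_pos H hW)
  nlinarith [key, hR, hkz]


lemma alphane (α : ℝ) (hα : α ∈ Set.Ioo (0:ℝ) 1 ∪ Set.Ioi 1) : α ≠ 0 := by
  rcases hα with ⟨h0, _⟩ | h1
  · exact ne_of_gt h0
  · simp only [Set.mem_Ioi] at h1; linarith

lemma numpos (k α p : ℝ) (hk : 1 ≤ k) (hα : α ∈ Set.Ioo (0:ℝ) 1 ∪ Set.Ioi 1)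
    (hp : 0 < p) (hq : 0 < 1 - k*p) (hqp : 1 - k*p < p) :
    0 < Yd2 k α p * Ed k p - Yd k α p * Ed2 k p := by
  have hα0 : α ≠ 0 := alphane α hα
  set q : ℝ := 1 - k*p with hqdef
  have hNpos : 0 < k * p ^ α + q ^ α := by
    have := Real.rpow_pos_of_pos hp α
    have := Real.rpow_pos_of_pos hq α
    nlinarith
  have halg := alg2 k p q α hk hp hq hqp (by rw [hqdef]; ring) hα
  have e1 : p ^ (α-1) = p ^ (α-2) * p := by
    have := Real.rpow_add_one hp.ne' (α-2)
    rwa [show α-2+1 = α-1 by ring] at this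
  have e2 : p ^ α = p ^ (α-2) * p * p := by
    have := Real.rpow_add_one hp.ne' (α-1)
    rw [show α-1+1 = α by ring] at this
    rw [this, e1]
  have f1 : q ^ (α-1) = q ^ (α-2) * q := by
    have := Real.rpow_add_one hq.ne' (α-2)
    rwa [show α-2+1 = α-1 by ring] at this
  have f2 : q ^ α = q ^ (α-2) * q * q := by
    have := Real.rpow_add_one hq.ne' (α-1)
    rw [show α-1+1 = α by ring] at this
    rw [this, f1]
  have eN : (k * p ^ α + q ^ α) ^ (1/α - 1)
      = (k * p ^ α + q ^ α) ^ (1/α - 2) * (k * p ^ α + q ^ α) := by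
    have := Real.rpow_add_one hNpos.ne' (1/α - 2)
    rwa [show 1/α-2+1 = 1/α-1 by ring] at this
  have hR : 0 < (k * p ^ α + q ^ α) ^ (1/α - 2) := Real.rpow_pos_of_pos hNpos _
  simp only [Yd2, Yd, Ed, Ed2, Nfun, ← hqdef] at *
  rw [e2, f2, e1, f1] at halg
  rw [e2, f2] at hR
  rw [eN, e2, f2, e1, f1]
  set P : ℝ := p ^ (α-2)
  set Q : ℝ := q ^ (α-2)
  set R : ℝ := (k * (P * p * p) + Q * q * q) ^ (1/α - 2)
  have hpos : 0 < k^2 * R / (p*q)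
      * ((α - 1) * (Real.log q - Real.log p) * (P * p * (Q * q))
        + (k * (P * p * p) + Q * q * q) * (P * p - Q * q)) := by
    apply mul_pos
    · apply div_pos _ (mul_pos hp hq)
      exact mul_pos (pow_pos (show (0:ℝ) < k by linarith) 2) hR
    · exact halg
  refine lt_of_lt_of_eq hpos ?_
  field_simp
  ring


section
variable {k α p : ℝ}

lemma alphapos (hα : α ∈ Set.Ioo (0:ℝ) 1 ∪ Set.Ioi 1) : 0 < α := by
  rcases hα with ⟨h0, _⟩ | h1
  · exact h0
  · simp only [Set.mem_Ioi] at h1; linarith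

lemma innerDeriv (k p : ℝ) : HasDerivAt (fun x : ℝ => 1 - k*x) (-k) p := by
  simpa using ((hasDerivAt_id p).const_mul k).const_sub 1

lemma Npos (hα : α ∈ Set.Ioo (0:ℝ) 1 ∪ Set.Ioi 1) (hp : 0 < p) (hq : 0 ≤ 1 - k*p)
    (hk : 1 ≤ k) : 0 < Nfun k α p := by
  have h1 : 0 < p ^ α := Real.rpow_pos_of_pos hp α
  have h2 : 0 ≤ (1 - k*p) ^ α := Real.rpow_nonneg hq α
  have : 0 < k := by linarith
  unfold Nfun; nlinarith

lemma EfunDeriv (hp : 0 < p) (hq : 0 < 1 - k*p) :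
    HasDerivAt (Efun k) (Ed k p) p := by
  have h1 : HasDerivAt (fun x : ℝ => x * Real.log x) (Real.log p + 1) p :=
    Real.hasDerivAt_mul_log hp.ne'
  have h2 : HasDerivAt (fun x : ℝ => (1 - k*x) * Real.log (1 - k*x))
      ((Real.log (1 - k*p) + 1) * (-k)) p :=
    by have := (Real.hasDerivAt_mul_log hq.ne').comp p (innerDeriv k p); exact this
  have := ((h1.const_mul k).add h2).neg
  unfold Efun Ed
  exact this.congr_deriv (by ring)

lemma NfunDeriv (hp : 0 < p) (hq : 0 < 1 - k*p) :
    HasDerivAt (Nfun k α) (k*α*p^(α-1) - k*α*(1 - k*p)^(α-1)) p := by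
  have h1 : HasDerivAt (fun x : ℝ => x ^ α) (α * p ^ (α-1)) p :=
    Real.hasDerivAt_rpow_const (Or.inl hp.ne')
  have h2 : HasDerivAt (fun x : ℝ => (1 - k*x) ^ α) (α * (1 - k*p) ^ (α-1) * (-k)) p :=
    by have := (Real.hasDerivAt_rpow_const (p := α) (Or.inl hq.ne')).comp p (innerDeriv k p); exact this
  have := (h1.const_mul k).add h2
  unfold Nfun
  exact this.congr_deriv (by ring)

lemma YfunDeriv (hα : α ∈ Set.Ioo (0:ℝ) 1 ∪ Set.Ioi 1) (hk : 1 ≤ k)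
    (hp : 0 < p) (hq : 0 < 1 - k*p) :
    HasDerivAt (Yfun k α) (Yd k α p) p := by
  have hN := Npos hα hp hq.le hk
  have houter : HasDerivAt (fun x : ℝ => x ^ (1/α)) ((1/α) * Nfun k α p ^ (1/α - 1))
      (Nfun k α p) := Real.hasDerivAt_rpow_const (Or.inl hN.ne')
  have := houter.comp p (NfunDeriv hp hq)
  unfold Yfun Yd
  refine this.congr_deriv ?_
  have hα0 : α ≠ 0 := (alphapos hα).ne'
  field_simp

lemma EdDeriv (hp : 0 < p) (hq : 0 < 1 - k*p) :
    HasDerivAt (Ed k) (Ed2 k p) p := by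
  have h1 : HasDerivAt (fun x : ℝ => Real.log (1 - k*x)) ((1 - k*p)⁻¹ * (-k)) p :=
    by have := (Real.hasDerivAt_log hq.ne').comp p (innerDeriv k p); exact this
  have h2 : HasDerivAt Real.log p⁻¹ p := Real.hasDerivAt_log hp.ne'
  have := (h1.sub h2).const_mul k
  unfold Ed Ed2
  refine this.congr_deriv ?_
  field_simp

lemma YdDeriv (hα : α ∈ Set.Ioo (0:ℝ) 1 ∪ Set.Ioi 1) (hk : 1 ≤ k)
    (hp : 0 < p) (hq : 0 < 1 - k*p) :
    HasDerivAt (Yd k α) (Yd2 k α p) p := by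
  have hN := Npos hα hp hq.le hk
  have hM : HasDerivAt (fun x : ℝ => Nfun k α x ^ (1/α - 1))
      ((1/α - 1) * Nfun k α p ^ (1/α - 1 - 1) * (k*α*p^(α-1) - k*α*(1 - k*p)^(α-1))) p :=
    (Real.hasDerivAt_rpow_const (Or.inl hN.ne')).comp p (NfunDeriv hp hq)
  have hu : HasDerivAt (fun x : ℝ => x ^ (α-1)) ((α-1) * p ^ (α-1-1)) p :=
    Real.hasDerivAt_rpow_const (Or.inl hp.ne')
  have hv : HasDerivAt (fun x : ℝ => (1 - k*x) ^ (α-1))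
      ((α-1) * (1 - k*p) ^ (α-1-1) * (-k)) p :=
    by have := (Real.hasDerivAt_rpow_const (p := α-1) (Or.inl hq.ne')).comp p (innerDeriv k p); exact this
  have := (hM.mul (hu.sub hv)).const_mul k
  unfold Yd Yd2
  refine (this.congr_deriv ?_).congr_of_eventuallyEq (Filter.Eventually.of_forall fun x => ?_)
  · rw [show (1:ℝ)/α - 1 - 1 = 1/α - 2 by ring, show α - 1 - 1 = α - 2 by ring]
    simp only [Pi.sub_apply]
    ring
  · simp only [Pi.mul_apply, Pi.sub_apply]
    ring

lemma EdNeg (hk : 1 ≤ k) (hp : 0 < p) (hq : 0 < 1 - k*p) (hqp : 1 - k*p < p) :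
    Ed k p < 0 := by
  have : Real.log (1 - k*p) < Real.log p := Real.log_lt_log hq hqp
  have hk0 : (0:ℝ) < k := by linarith
  unfold Ed
  nlinarith

lemma EfunCont (k : ℝ) : Continuous (Efun k) := by
  have c1 : Continuous fun p : ℝ => p * Real.log p := Real.continuous_mul_log
  have ci : Continuous fun p : ℝ => 1 - k*p := by continuity
  have c2 : Continuous fun p : ℝ => (1 - k*p) * Real.log (1 - k*p) := c1.comp ci
  exact ((continuous_const.mul c1).add c2).neg

lemma rpowCont (α : ℝ) (hα : 0 ≤ α) : Continuous fun x : ℝ => x ^ α :=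
  continuous_iff_continuousAt.2 fun x => Real.continuousAt_rpow_const x α (Or.inr hα)

lemma YfunCont (hα : α ∈ Set.Ioo (0:ℝ) 1 ∪ Set.Ioi 1) : Continuous (Yfun k α) := by
  have hα0 := alphapos hα
  have cN : Continuous (Nfun k α) := by
    have := rpowCont α hα0.le
    exact (continuous_const.mul this).add (this.comp (by continuity))
  exact (rpowCont (1/α) (by positivity)).comp cN

end


section
variable {k α : ℝ}

-- membership facts
lemma memFacts (hk : 1 ≤ k) {p : ℝ} (hp : p ∈ Ioo (1/(k+1)) (1/k)) :
    0 < p ∧ 0 < 1 - k*p ∧ 1 - k*p < p := by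
  have hk0 : (0:ℝ) < k := by linarith
  have hk1 : (0:ℝ) < k + 1 := by linarith
  obtain ⟨h1, h2⟩ := hp
  have ha : (0:ℝ) < 1/(k+1) := by positivity
  have hp0 : 0 < p := lt_trans ha h1
  have e2 : p * k < 1 := (lt_div_iff₀ hk0).1 h2
  have e1 : 1 < p * (k+1) := (div_lt_iff₀ hk1).1 h1
  refine ⟨hp0, by nlinarith, by nlinarith⟩

lemma phiMono (hk : 1 ≤ k) (hα : α ∈ Set.Ioo (0:ℝ) 1 ∪ Set.Ioi 1) :
    StrictMonoOn (phi k α) (Ioo (1/(k+1)) (1/k)) := by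
  apply strictMonoOn_of_deriv_pos (convex_Ioo _ _)
  · intro p hp
    obtain ⟨hp0, hq0, hqp⟩ := memFacts hk hp
    exact (((YdDeriv hα hk hp0 hq0).div (EdDeriv hp0 hq0)
      (EdNeg hk hp0 hq0 hqp).ne).continuousAt).continuousWithinAt
  · rw [interior_Ioo]
    intro p hp
    obtain ⟨hp0, hq0, hqp⟩ := memFacts hk hp
    have hEd := EdNeg hk hp0 hq0 hqp
    have hd : HasDerivAt (fun x => Yd k α x / Ed k x)
        ((Yd2 k α p * Ed k p - Yd k α p * Ed2 k p) / Ed k p ^ 2) p :=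
      (YdDeriv hα hk hp0 hq0).div (EdDeriv hp0 hq0) hEd.ne
    have : deriv (phi k α) p = (Yd2 k α p * Ed k p - Yd k α p * Ed2 k p) / Ed k p ^ 2 :=
      hd.deriv
    rw [this]
    apply div_pos (numpos k α p hk hα hp0 hq0 hqp)
    nlinarith

lemma EstrictAnti (hk : 1 ≤ k) : StrictAntiOn (Efun k) (Icc (1/(k+1)) (1/k)) := by
  apply strictAntiOn_of_deriv_neg (convex_Icc _ _) (EfunCont k).continuousOn
  rw [interior_Icc]
  intro p hp
  obtain ⟨hp0, hq0, hqp⟩ := memFacts hk hp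
  rw [(EfunDeriv hp0 hq0).deriv]
  exact EdNeg hk hp0 hq0 hqp

lemma Eleft (hk : 1 ≤ k) : Efun k (1/(k+1)) = Real.log (k+1) := by
  have hk1 : (0:ℝ) < k + 1 := by linarith
  have h1 : 1 - k * (1/(k+1)) = 1/(k+1) := by field_simp; ring
  unfold Efun
  rw [h1, one_div, Real.log_inv]
  field_simp
  ring

lemma Eright (hk : 1 ≤ k) : Efun k (1/k) = Real.log k := by
  have hk0 : (0:ℝ) < k := by linarith
  have h1 : 1 - k * (1/k) = 0 := by field_simp; ring
  unfold Efun
  rw [h1, one_div, Real.log_inv]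
  simp only [Real.log_zero, mul_zero, zero_mul, add_zero]
  field_simp

lemma intIcc (hk : 1 ≤ k) : 1/(k+1) ≤ 1/k := by
  have hk0 : (0:ℝ) < k := by linarith
  exact one_div_le_one_div_of_le hk0 (by linarith)

lemma Esurj (hk : 1 ≤ k) : Icc (Real.log k) (Real.log (k+1)) ⊆
    Efun k '' Icc (1/(k+1)) (1/k) := by
  have := intermediate_value_Icc' (intIcc hk) (EfunCont k).continuousOn
  rwa [Eleft hk, Eright hk] at this

end


section
variable {k α : ℝ}

lemma slopeEq (hk : 1 ≤ k) (hα : α ∈ Set.Ioo (0:ℝ) 1 ∪ Set.Ioi 1)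
    {a b : ℝ} (ha : a ∈ Icc (1/(k+1)) (1/k)) (hb : b ∈ Icc (1/(k+1)) (1/k))
    (hab : a < b) :
    ∃ c ∈ Ioo a b, (Yfun k α b - Yfun k α a) / (Efun k b - Efun k a) = phi k α c := by
  have hsub : Ioo a b ⊆ Ioo (1/(k+1)) (1/k) := Ioo_subset_Ioo ha.1 hb.2
  have hff' : ∀ x ∈ Ioo a b, HasDerivAt (Yfun k α) (Yd k α x) x := by
    intro x hx
    obtain ⟨h1, h2, h3⟩ := memFacts hk (hsub hx)
    exact YfunDeriv hα hk h1 h2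
  have hgg' : ∀ x ∈ Ioo a b, HasDerivAt (Efun k) (Ed k x) x := by
    intro x hx
    obtain ⟨h1, h2, h3⟩ := memFacts hk (hsub hx)
    exact EfunDeriv h1 h2
  obtain ⟨c, hc, hceq⟩ := exists_ratio_hasDerivAt_eq_ratio_slope (Yfun k α) (Yd k α) hab
    ((YfunCont hα).continuousOn) hff' (Efun k) (Ed k) (EfunCont k).continuousOn hgg'
  refine ⟨c, hc, ?_⟩
  obtain ⟨h1, h2, h3⟩ := memFacts hk (hsub hc)
  have hEdc : Ed k c ≠ 0 := (EdNeg hk h1 h2 h3).ne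
  have hEab : Efun k b - Efun k a ≠ 0 := by
    have := EstrictAnti hk ha hb hab
    linarith
  unfold phi
  rw [div_eq_div_iff hEab hEdc]
  linarith [hceq]

lemma concaveG (hk : 1 ≤ k) (hα : α ∈ Set.Ioo (0:ℝ) 1 ∪ Set.Ioi 1) (F : ℝ → ℝ)
    (hFE : ∀ p ∈ Icc (1/(k+1)) (1/k), F (Efun k p) = Yfun k α p) :
    StrictConcaveOn ℝ (Icc (Real.log k) (Real.log (k+1))) F := by
  rw [strictConcaveOn_iff_slope_strict_anti_adjacent]
  refine ⟨convex_Icc _ _, ?_⟩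
  intro x y z hx hz hxy hyz
  have hy : y ∈ Icc (Real.log k) (Real.log (k+1)) :=
    ⟨le_trans hx.1 hxy.le, le_trans hyz.le hz.2⟩
  obtain ⟨px, hpx, hEx⟩ := Esurj hk hx
  obtain ⟨py, hpy, hEy⟩ := Esurj hk hy
  obtain ⟨pz, hpz, hEz⟩ := Esurj hk hz
  -- order of parameters
  have hyx : py < px := by
    rcases lt_trichotomy py px with h | h | h
    · exact h
    · exfalso; rw [h, hEx] at hEy; linarith
    · exfalso; have := EstrictAnti hk hpx hpy h; rw [hEx, hEy] at this; linarith
  have hzy : pz < py := by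
    rcases lt_trichotomy pz py with h | h | h
    · exact h
    · exfalso; rw [h, hEy] at hEz; linarith
    · exfalso; have := EstrictAnti hk hpy hpz h; rw [hEy, hEz] at this; linarith
  obtain ⟨c, hc, hceq⟩ := slopeEq hk hα hpy hpx hyx
  obtain ⟨c', hc', hceq'⟩ := slopeEq hk hα hpz hpy hzy
  have hcc' : c' < c := lt_trans hc'.2 hc.1
  have hcI : c ∈ Ioo (1/(k+1)) (1/k) := Ioo_subset_Ioo hpy.1 hpx.2 hc
  have hcI' : c' ∈ Ioo (1/(k+1)) (1/k) := Ioo_subset_Ioo hpz.1 hpy.2 hc'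
  have hphi : phi k α c' < phi k α c := phiMono hk hα hcI' hcI hcc'
  -- rewrite slopes
  have s1 : (F y - F x) / (y - x) = phi k α c := by
    rw [← hEx, ← hEy, hFE px hpx, hFE py hpy, ← hceq]
    rw [← neg_sub (Yfun k α py), ← neg_sub (Efun k py), neg_div_neg_eq]
  have s2 : (F z - F y) / (z - y) = phi k α c' := by
    rw [← hEy, ← hEz, hFE py hpy, hFE pz hpz, ← hceq']
    rw [← neg_sub (Yfun k α pz), ← neg_sub (Efun k pz), neg_div_neg_eq]
  rw [s1, s2]
  exact hphi

end


lemma sumW (n : ℕ) (r : ℝ) (f : ℝ → ℝ) (hf0 : f 0 = 0) (hK : ⌊1/r⌋₊ ≤ n)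
    (hcase : ⌊1/r⌋₊ < n ∨ 1 - (⌊1/r⌋₊ : ℝ) * r = 0) :
    ∑ i : Fin n, f (wVec n r i)
      = (⌊1/r⌋₊ : ℝ) * f r + f (1 - (⌊1/r⌋₊ : ℝ) * r) := by
  set K := ⌊1/r⌋₊ with hKdef
  have h1 : ∑ i : Fin n, f (wVec n r i)
      = ∑ j ∈ Finset.range n,
        f (if j < K then r else if j = K then 1 - (K:ℝ)*r else 0) :=
    Fin.sum_univ_eq_sum_range
      (fun j => f (if j < K then r else if j = K then 1 - (K:ℝ)*r else 0)) n
  rw [h1, Finset.range_eq_Ico, ← Finset.sum_Ico_consecutive _ (Nat.zero_le K) hK]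
  have h2 : ∑ j ∈ Finset.Ico 0 K,
      f (if j < K then r else if j = K then 1 - (K:ℝ)*r else 0) = (K:ℝ) * f r := by
    rw [Finset.sum_congr rfl (fun j hj => ?_), Finset.sum_const, Nat.card_Ico,
      Nat.sub_zero, nsmul_eq_mul]
    rw [if_pos (Finset.mem_Ico.1 hj).2]
  have h3 : ∑ j ∈ Finset.Ico K n,
      f (if j < K then r else if j = K then 1 - (K:ℝ)*r else 0)
      = if K ∈ Finset.Ico K n then f (1 - (K:ℝ)*r) else 0 := by
    rw [← Finset.sum_ite_eq' (Finset.Ico K n) K (fun _ => f (1 - (K:ℝ)*r))]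
    refine Finset.sum_congr rfl (fun j hj => ?_)
    have hjK : ¬ j < K := not_lt.2 (Finset.mem_Ico.1 hj).1
    rw [if_neg hjK]
    by_cases h : j = K
    · rw [if_pos h, if_pos h]
    · rw [if_neg h, if_neg h, hf0]
  rw [h2, h3]
  rcases hcase with h | h
  · rw [if_pos (Finset.mem_Ico.2 ⟨le_refl K, h⟩)]
  · rw [h, hf0]
    by_cases hKn : K ∈ Finset.Ico K n <;> simp [hKn]

lemma floorCase (m : ℕ) (hm : 2 ≤ m) (p : ℝ) (h1 : 1/(m:ℝ) < p)
    (h2 : p ≤ 1/((m:ℝ)-1)) : ⌊1/p⌋₊ = m - 1 := by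
  have hm1 : (1:ℝ) ≤ (m:ℝ) - 1 := by
    have : (2:ℝ) ≤ (m:ℝ) := by exact_mod_cast hm
    linarith
  have hmpos : (0:ℝ) < m := by linarith
  have hp0 : 0 < p := lt_trans (by positivity) h1
  have hcast : ((m - 1 : ℕ) : ℝ) = (m:ℝ) - 1 := by
    have : 1 ≤ m := by omega
    push_cast [Nat.cast_sub this]
    ring
  rw [Nat.floor_eq_iff (by positivity)]
  constructor
  · rw [hcast, le_div_iff₀ hp0]
    nlinarith [(le_div_iff₀ (show (0:ℝ) < (m:ℝ)-1 by linarith)).1 h2]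
  · rw [hcast, sub_add_cancel, one_div_lt hp0 hmpos]
    exact h1

lemma floorEq (m : ℕ) (hm : 2 ≤ m) : ⌊1/(1/(m:ℝ))⌋₊ = m := by
  rw [one_div_one_div, Nat.floor_natCast]

section
variable {m n : ℕ} {α : ℝ}

lemma EW (hm : 2 ≤ m) (hmn : m ≤ n) (p : ℝ)
    (hp : p ∈ Icc (1/(m:ℝ)) (1/((m:ℝ)-1))) :
    shannonEntropy (wVec n p) = Efun ((m:ℝ)-1) p := by
  have hm2 : (2:ℝ) ≤ (m:ℝ) := by exact_mod_cast hm
  have hcast : ((m - 1 : ℕ) : ℝ) = (m:ℝ) - 1 := by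
    have : 1 ≤ m := by omega
    push_cast [Nat.cast_sub this]; ring
  rcases eq_or_lt_of_le hp.1 with h | h
  · -- p = 1/m
    rw [← h]
    have hm0 : (m:ℝ) ≠ 0 := by positivity
    have hfl : ⌊1/(1/(m:ℝ))⌋₊ = m := floorEq m hm
    have hz : 1 - (m:ℝ)*(1/(m:ℝ)) = 0 := by field_simp; ring
    have hsum := sumW n (1/(m:ℝ)) (fun x => x * Real.log x) (by simp)
      (by rw [hfl]; exact hmn) (Or.inr (by rw [hfl]; exact hz))
    rw [hfl] at hsum
    unfold shannonEntropy Efun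
    rw [hsum, hz]
    have hq : 1 - ((m:ℝ)-1)*(1/(m:ℝ)) = 1/(m:ℝ) := by field_simp; ring
    rw [hq]
    simp only [Real.log_zero, mul_zero, zero_mul, add_zero]
    ring
  · have hfl := floorCase m hm p h hp.2
    have hsum := sumW n p (fun x => x * Real.log x) (by simp)
      (by rw [hfl]; omega) (by left; rw [hfl]; omega)
    rw [hfl, hcast] at hsum
    unfold shannonEntropy Efun
    rw [hsum]

lemma YW (hm : 2 ≤ m) (hmn : m ≤ n) (hα0 : α ≠ 0) (p : ℝ)
    (hp : p ∈ Icc (1/(m:ℝ)) (1/((m:ℝ)-1))) :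
    lNorm α (wVec n p) = Yfun ((m:ℝ)-1) α p := by
  have hm2 : (2:ℝ) ≤ (m:ℝ) := by exact_mod_cast hm
  have hcast : ((m - 1 : ℕ) : ℝ) = (m:ℝ) - 1 := by
    have : 1 ≤ m := by omega
    push_cast [Nat.cast_sub this]; ring
  have hf0 : (fun x : ℝ => x ^ α) 0 = 0 := Real.zero_rpow hα0
  rcases eq_or_lt_of_le hp.1 with h | h
  · rw [← h]
    have hm0 : (m:ℝ) ≠ 0 := by positivity
    have hfl : ⌊1/(1/(m:ℝ))⌋₊ = m := floorEq m hm
    have hz : 1 - (m:ℝ)*(1/(m:ℝ)) = 0 := by field_simp; ring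
    have hsum := sumW n (1/(m:ℝ)) (fun x => x ^ α) hf0
      (by rw [hfl]; exact hmn) (Or.inr (by rw [hfl]; exact hz))
    rw [hfl] at hsum
    unfold lNorm Yfun Nfun
    rw [hsum, hz]
    have hq : 1 - ((m:ℝ)-1)*(1/(m:ℝ)) = 1/(m:ℝ) := by field_simp; ring
    rw [hq]
    simp only [Real.zero_rpow hα0, add_zero]
    congr 1
    ring
  · have hfl := floorCase m hm p h hp.2
    have hsum := sumW n p (fun x => x ^ α) hf0
      (by rw [hfl]; omega) (by left; rw [hfl]; omega)
    rw [hfl, hcast] at hsum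
    unfold lNorm Yfun Nfun
    rw [hsum]

end

end Aux

theorem stmt6 (n m : ℕ) (hm : 2 ≤ m) (hmn : m ≤ n)
    (α : ℝ) (hα : α ∈ Set.Ioo (0 : ℝ) 1 ∪ Set.Ioi 1)
    (F : ℝ → ℝ)
    (hF : ∀ p ∈ Set.Icc (1 / (m : ℝ)) (1 / ((m : ℝ) - 1)),
      F (shannonEntropy (wVec n p)) = lNorm α (wVec n p)) :
    StrictConcaveOn ℝ (Set.Icc (Real.log ((m : ℝ) - 1)) (Real.log m)) F := by
  have hm2 : (2:ℝ) ≤ (m:ℝ) := by exact_mod_cast hm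
  have hk : (1:ℝ) ≤ (m:ℝ) - 1 := by linarith
  have hα0 : α ≠ 0 := alphane α hα
  have key := concaveG (k := (m:ℝ)-1) (α := α) hk hα F ?_
  · rwa [sub_add_cancel] at key
  · intro p hp
    rw [sub_add_cancel] at hp
    rw [← EW hm hmn p hp, ← YW hm hmn hα0 p hp]
    exact hF p hp
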